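/- arXiv:2402.13381 — 5 statements merged into one kernel-verified Lean document; each statement's English description precedes it below -/
import Mathlib

section
/- Let T be a TSS matrix on a connected acyclic undirected graph G = (V,E) with rank profile ρ : E → ℕ (so T admits a TSS representation on G with edge dimensions ρ). Then (T,G) satisfies the graph-induced rank structure (GIRS) property with constant c = max_{e ∈ E} ρ(e); that is, for every subset A ⊆ V, rank T⟨Ā,A⟩ ≤ (max_{e∈E} ρ(e)) · E(A), where E(A) is the number of border edges of A. -/
open Matrix

attribute [local instance] Classical.propDecidable

namespace TSS

variable {F : Type*} [Field F] {V : Type*} [Fintype V] [DecidableEq V]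

/-- The `(i,j)` block of a graph-partitioned matrix. -/
def blockOf {m n : V → ℕ} (T : Matrix ((i : V) × Fin (m i)) ((j : V) × Fin (n j)) F)
    (i j : V) : Matrix (Fin (m i)) (Fin (n j)) F :=
  fun a b => T ⟨i, a⟩ ⟨j, b⟩

/-- The submatrix `T⟨A,B⟩` of a graph-partitioned matrix. -/
def subBlock {m n : V → ℕ} (T : Matrix ((i : V) × Fin (m i)) ((j : V) × Fin (n j)) F)
    (A B : Set V) :
    Matrix {p : (i : V) × Fin (m i) // p.1 ∈ A} {q : (j : V) × Fin (n j) // q.1 ∈ B} F :=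
  T.submatrix (fun p => p.1) (fun q => q.1)

/-- The Hankel block `T⟨Ā,A⟩` induced by `A`. -/
def hankelBlock {m n : V → ℕ} (T : Matrix ((i : V) × Fin (m i)) ((j : V) × Fin (n j)) F)
    (A : Set V) :
    Matrix {p : (i : V) × Fin (m i) // p.1 ∈ Aᶜ} {q : (j : V) × Fin (n j) // q.1 ∈ A} F :=
  subBlock T Aᶜ A

/-- The number of border edges of `A`: edges of `G` with one endpoint in `A` and the other
outside of `A` (each such undirected edge is counted once, via its orientation out of `A`). -/
noncomputable def edgeCount (G : SimpleGraph V) (A : Set V) : ℕ :=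
  Nat.card {e : V × V // e.1 ∈ A ∧ e.2 ∉ A ∧ G.Adj e.1 e.2}

/-- The vertex set of the connected component containing `i` after deleting the edge `{i,j}`. -/
def side (G : SimpleGraph V) (i j : V) : Set V :=
  {v | (G.deleteEdges {s(i, j)}).Reachable i v}

/-- The unit Hankel block associated with the directed edge `(i,j)`. -/
def unitHankel (G : SimpleGraph V) {m n : V → ℕ}
    (T : Matrix ((i : V) × Fin (m i)) ((j : V) × Fin (n j)) F) (i j : V) :=
  hankelBlock T (side G i j)

/-- `outChain Out Trans k i w j` is the product
`Out^i_{p_{ν−1}} · Trans^{p_{ν−1}}_{i,p_{ν−2}} ⋯ Trans^{k}_{p₁,j}` along the walk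
`w : k = p₀ − p₁ − ⋯ − p_ν = i`, with incoming edge `(j,k)`. -/
noncomputable def outChain {G : SimpleGraph V} {m : V → ℕ} {ρ : V → V → ℕ}
    (Out : ∀ k i : V, Matrix (Fin (m k)) (Fin (ρ i k)) F)
    (Trans : ∀ k i j : V, Matrix (Fin (ρ k i)) (Fin (ρ j k)) F) :
    ∀ (k i : V), G.Walk k i → ∀ j : V, Matrix (Fin (m i)) (Fin (ρ j k)) F
  | k, _, .nil, j => Out k j
  | k, _, .cons (v := k') _ w, j => outChain Out Trans k' _ w k * Trans k k' j

/-- `pathMatrix Inp Trans Out j i w` is the product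
`Out^i_{p_{ν−1}} · Trans^{p_{ν−1}}_{i,p_{ν−2}} ⋯ Trans^{p₁}_{p₂,j} · Inp^j_{p₁}` along the
walk `w : j = p₀ − p₁ − ⋯ − p_ν = i` (and junk `0` for the empty walk). -/
noncomputable def pathMatrix {G : SimpleGraph V} {m n : V → ℕ} {ρ : V → V → ℕ}
    (Inp : ∀ k j : V, Matrix (Fin (ρ k j)) (Fin (n k)) F)
    (Trans : ∀ k i j : V, Matrix (Fin (ρ k i)) (Fin (ρ j k)) F)
    (Out : ∀ k i : V, Matrix (Fin (m k)) (Fin (ρ i k)) F) :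
    ∀ (j i : V), G.Walk j i → Matrix (Fin (m i)) (Fin (n j)) F
  | _, _, .nil => 0
  | j, i, .cons (v := p1) _ w => outChain Out Trans p1 i w j * Inp j p1

/-- A TSS representation of the graph-partitioned matrix `T` on the tree `G`, with
output dimensions `m`, input dimensions `n` and rank profile `ρ` (only the values of the
generators and of `ρ` on (pairs of adjoining) directed edges of `G` are relevant). -/
structure TSSRepr (G : SimpleGraph V) (m n : V → ℕ) (ρ : V → V → ℕ)
    (T : Matrix ((i : V) × Fin (m i)) ((j : V) × Fin (n j)) F) where
  D : ∀ k : V, Matrix (Fin (m k)) (Fin (n k)) F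
  Inp : ∀ k j : V, Matrix (Fin (ρ k j)) (Fin (n k)) F
  Trans : ∀ k i j : V, Matrix (Fin (ρ k i)) (Fin (ρ j k)) F
  Out : ∀ k i : V, Matrix (Fin (m k)) (Fin (ρ i k)) F
  diag : ∀ i : V, blockOf T i i = D i
  offdiag : ∀ {i j : V}, i ≠ j → ∀ w : G.Walk j i, w.IsPath →
      blockOf T i j = pathMatrix Inp Trans Out j i w

/-! ### Auxiliary material for the proof -/

section Aux

open SimpleGraph

variable {G : SimpleGraph V}

/-- An `Out`-style generator routing into `Fin (ρ a b)`: a (dimension-cast of) `Trans · b ·`. -/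
noncomputable def transOut (ρ : V → V → ℕ)
    (Trans : ∀ k i j : V, Matrix (Fin (ρ k i)) (Fin (ρ j k)) F) (a b : V) :
    ∀ k j : V, Matrix (Fin (ρ a b)) (Fin (ρ j k)) F :=
  fun k j x y => if h : (x : ℕ) < ρ k b then Trans k b j ⟨x, h⟩ y else 0

lemma transOut_self (ρ : V → V → ℕ)
    (Trans : ∀ k i j : V, Matrix (Fin (ρ k i)) (Fin (ρ j k)) F) (a b j : V) :
    transOut (F := F) ρ Trans a b a j = Trans a b j := by
  funext x y
  simp only [transOut]
  rw [dif_pos x.isLt]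

/-- `inpChain a b j w` is the product `Trans^a_{b,·} ⋯ Trans^{p₁}_{p₂,j} · Inp^j_{p₁}` along
the walk `w : j → a`, producing into `Fin (ρ a b)` (and `Inp a b` for the empty walk). -/
noncomputable def inpChain {n : V → ℕ} {ρ : V → V → ℕ}
    (Inp : ∀ k j : V, Matrix (Fin (ρ k j)) (Fin (n k)) F)
    (Trans : ∀ k i j : V, Matrix (Fin (ρ k i)) (Fin (ρ j k)) F) (a b : V) :
    ∀ j : V, G.Walk j a → Matrix (Fin (ρ a b)) (Fin (n j)) F
  | _, .nil => Inp a b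
  | j, .cons (v := p1) _ w =>
      outChain (m := fun _ => ρ a b) (transOut ρ Trans a b) Trans p1 a w j * Inp j p1

lemma outChain_append {m : V → ℕ} {ρ : V → V → ℕ}
    (Out : ∀ k i : V, Matrix (Fin (m k)) (Fin (ρ i k)) F)
    (Trans : ∀ k i j : V, Matrix (Fin (ρ k i)) (Fin (ρ j k)) F)
    {a b : V} (hab : G.Adj a b) {k : V} (w1 : G.Walk k a) :
    ∀ {i : V} (w2 : G.Walk b i) (j : V),
      outChain Out Trans k i (w1.append (.cons hab w2)) j
        = outChain Out Trans b i w2 a *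
            outChain (m := fun _ => ρ a b) (transOut ρ Trans a b) Trans k a w1 j := by
  induction w1 with
  | nil =>
    intro i w2 j
    simp [outChain, transOut_self]
  | cons h w ih =>
    intro i w2 j
    rw [Walk.cons_append]
    simp only [outChain]
    rw [ih, Matrix.mul_assoc]

lemma pathMatrix_split {m n : V → ℕ} {ρ : V → V → ℕ}
    (Inp : ∀ k j : V, Matrix (Fin (ρ k j)) (Fin (n k)) F)
    (Trans : ∀ k i j : V, Matrix (Fin (ρ k i)) (Fin (ρ j k)) F)
    (Out : ∀ k i : V, Matrix (Fin (m k)) (Fin (ρ i k)) F)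
    {a b : V} (hab : G.Adj a b) {j i : V} (w1 : G.Walk j a) (w2 : G.Walk b i) :
    pathMatrix Inp Trans Out j i (w1.append (.cons hab w2))
      = outChain Out Trans b i w2 a * inpChain Inp Trans a b j w1 := by
  cases w1 with
  | nil =>
    simp [pathMatrix, inpChain, outChain]
  | cons h w =>
    rw [Walk.cons_append]
    simp only [pathMatrix, inpChain]
    rw [outChain_append Out Trans hab w, Matrix.mul_assoc]

/-- Any walk ending outside of `A` either avoids `A` entirely, or splits at a last
crossing edge `(a,b)` out of `A`. -/
lemma exists_split (A : Set V) {s i : V} (w : G.Walk s i) (hi : i ∉ A) :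
    (∀ v ∈ w.support, v ∉ A) ∨
    ∃ (a b : V) (hab : G.Adj a b) (w1 : G.Walk s a) (w2 : G.Walk b i),
      a ∈ A ∧ b ∉ A ∧ w = w1.append (.cons hab w2) ∧ ∀ v ∈ w2.support, v ∉ A := by
  induction w with
  | nil =>
    left
    intro v hv
    simp only [Walk.support_nil, List.mem_singleton] at hv
    subst hv; exact hi
  | @cons s p1 i h w ih =>
    rcases ih hi with hall | ⟨a, b, hab, w1, w2, ha, hb, heq, hA⟩
    · by_cases hs : s ∈ A
      · right
        exact ⟨s, p1, h, .nil, w, hs, hall p1 w.start_mem_support,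
          by rw [Walk.nil_append], hall⟩
      · left
        intro v hv
        rw [Walk.support_cons, List.mem_cons] at hv
        rcases hv with rfl | hv
        · exact hs
        · exact hall v hv
    · right
      exact ⟨a, b, hab, .cons h w1, w2, ha, hb, by rw [Walk.cons_append, heq], hA⟩

/-- The splitting at a last crossing edge is unique (on the level of the crossing edge). -/
lemma split_unique (A : Set V) {s a i : V} (w1 : G.Walk s a) :
    ∀ {b : V} (hab : G.Adj a b) (w2 : G.Walk b i) {a' b' : V} (hab' : G.Adj a' b')
      (w1' : G.Walk s a') (w2' : G.Walk b' i),
      a ∈ A → a' ∈ A → (∀ v ∈ w2.support, v ∉ A) → (∀ v ∈ w2'.support, v ∉ A) →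
      w1.append (.cons hab w2) = w1'.append (.cons hab' w2') → a = a' ∧ b = b' := by
  induction w1 with
  | nil =>
    intro b hab w2 a' b' hab' w1' w2' ha ha' h2 h2' heq
    rw [Walk.nil_append] at heq
    cases w1' with
    | nil =>
      rw [Walk.nil_append] at heq
      injection heq with h1 hb h3 h4
      exact ⟨rfl, hb⟩
    | cons h' y =>
      rw [Walk.cons_append] at heq
      injection heq with h1 hb h3 h4
      subst hb
      have hw2 : w2 = y.append (.cons hab' w2') := eq_of_heq h4
      exfalso
      refine h2 a' ?_ ha'
      rw [hw2, Walk.mem_support_append_iff]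
      exact Or.inl y.end_mem_support
  | cons h w ih =>
    intro b hab w2 a' b' hab' w1' w2' ha ha' h2 h2' heq
    rw [Walk.cons_append] at heq
    cases w1' with
    | nil =>
      rw [Walk.nil_append] at heq
      injection heq with h1 hb h3 h4
      subst hb
      have hw2' : w.append (.cons hab w2) = w2' := eq_of_heq h4
      exfalso
      refine h2' _ ?_ ha
      rw [← hw2', Walk.mem_support_append_iff]
      exact Or.inl w.end_mem_support
    | cons h' y =>
      rw [Walk.cons_append] at heq
      injection heq with h1 hmid h3 h4
      subst hmid
      exact ih hab w2 hab' y w2' ha ha' h2 h2' (eq_of_heq h4)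

/-- In an acyclic graph, two walks into the opposite endpoints of an edge which avoid the
other endpoint have disjoint supports. -/
lemma walks_disjoint (hac : G.IsAcyclic) {a b j i : V} (hab : G.Adj a b)
    {w1 : G.Walk j a} {w2 : G.Walk b i} (hb : b ∉ w1.support) (ha : a ∉ w2.support) :
    ∀ v, v ∈ w1.support → v ∈ w2.support → False := by
  intro v hv1 hv2
  have hbridge : G.IsBridge s(a, b) :=
    SimpleGraph.isAcyclic_iff_forall_edge_isBridge.1 hac (G.mem_edgeSet.2 hab)
  rw [SimpleGraph.isBridge_iff] at hbridge
  apply hbridge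
  rw [SimpleGraph.reachable_delete_edges_iff_exists_walk]
  refine ⟨(w1.dropUntil v hv1).reverse.append (w2.takeUntil v hv2).reverse, ?_⟩
  intro hmem
  rw [Walk.edges_append, List.mem_append] at hmem
  rcases hmem with hmem | hmem
  · rw [Walk.edges_reverse, List.mem_reverse] at hmem
    exact hb (Walk.support_dropUntil_subset w1 hv1
      (Walk.snd_mem_support_of_mem_edges _ hmem))
  · rw [Walk.edges_reverse, List.mem_reverse] at hmem
    exact ha (Walk.support_takeUntil_subset w2 hv2
      (Walk.fst_mem_support_of_mem_edges _ hmem))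

lemma append_cons_isPath (hac : G.IsAcyclic) {a b j i : V} (hab : G.Adj a b)
    {w1 : G.Walk j a} {w2 : G.Walk b i} (h1 : w1.IsPath) (h2 : w2.IsPath)
    (hb : b ∉ w1.support) (ha : a ∉ w2.support) :
    (w1.append (.cons hab w2)).IsPath := by
  rw [Walk.isPath_def, Walk.support_append, Walk.support_cons, List.tail_cons,
    List.nodup_append]
  exact ⟨h1.support_nodup, h2.support_nodup,
    fun x hx y hy hxy => walks_disjoint hac hab hb ha x hx (hxy ▸ hy)⟩

/-- The canonical path between two vertices of a connected graph. -/
noncomputable def cpath (hc : G.Connected) (i j : V) : G.Path i j :=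
  (hc i j).some.toPath

lemma cpath_eq (hac : G.IsAcyclic) (hc : G.Connected) {i j : V} {w : G.Walk i j}
    (hw : w.IsPath) : ((cpath hc i j : G.Path i j) : G.Walk i j) = w :=
  congrArg Subtype.val (hac.path_unique (cpath hc i j) ⟨w, hw⟩)

lemma rank_add_le' {α β : Type*} [Fintype α] [Fintype β] (A B : Matrix α β F) :
    (A + B).rank ≤ A.rank + B.rank := by
  rw [Matrix.rank, Matrix.rank, Matrix.rank, Matrix.mulVecLin_add]
  have hle : LinearMap.range (A.mulVecLin + B.mulVecLin) ≤
      LinearMap.range A.mulVecLin ⊔ LinearMap.range B.mulVecLin := by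
    rintro x ⟨y, rfl⟩
    exact Submodule.add_mem_sup (LinearMap.mem_range_self _ y) (LinearMap.mem_range_self _ y)
  exact (Submodule.finrank_mono hle).trans
    (Submodule.finrank_add_le_finrank_add_finrank _ _)

lemma rank_sum_le {α β ι : Type*} [Fintype α] [Fintype β] (s : Finset ι)
    (f : ι → Matrix α β F) : (∑ e ∈ s, f e).rank ≤ ∑ e ∈ s, (f e).rank := by
  classical
  induction s using Finset.induction with
  | empty => simp [Matrix.rank_zero]
  | insert _ _ hx ih =>
    rw [Finset.sum_insert hx, Finset.sum_insert hx]
    exact (rank_add_le' _ _).trans (add_le_add_right ih _)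

/-- The left factor attached to the directed border edge `e`. -/
noncomputable def Lmat (hc : G.Connected) {m n : V → ℕ} {ρ : V → V → ℕ}
    {T : Matrix ((i : V) × Fin (m i)) ((j : V) × Fin (n j)) F} (r : TSSRepr G m n ρ T)
    (A : Set V) (e : V × V) :
    Matrix {p : (i : V) × Fin (m i) // p.1 ∈ Aᶜ} (Fin (ρ e.1 e.2)) F :=
  fun p z =>
    if ∀ v ∈ ((cpath hc e.2 p.1.1 : G.Path e.2 p.1.1) : G.Walk e.2 p.1.1).support, v ∉ A then
      outChain r.Out r.Trans e.2 p.1.1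
        ((cpath hc e.2 p.1.1 : G.Path e.2 p.1.1) : G.Walk e.2 p.1.1) e.1 p.1.2 z
    else 0

/-- The right factor attached to the directed border edge `e`. -/
noncomputable def Rmat (hc : G.Connected) {m n : V → ℕ} {ρ : V → V → ℕ}
    {T : Matrix ((i : V) × Fin (m i)) ((j : V) × Fin (n j)) F} (r : TSSRepr G m n ρ T)
    (A : Set V) (e : V × V) :
    Matrix (Fin (ρ e.1 e.2)) {q : (j : V) × Fin (n j) // q.1 ∈ A} F :=
  fun z q =>
    if e.2 ∉ ((cpath hc q.1.1 e.1 : G.Path q.1.1 e.1) : G.Walk q.1.1 e.1).support then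
      inpChain r.Inp r.Trans e.1 e.2 q.1.1
        ((cpath hc q.1.1 e.1 : G.Path q.1.1 e.1) : G.Walk q.1.1 e.1) z q.1.2
    else 0

end Aux

/-- A TSS matrix `T` on a tree `G` with rank profile `ρ` satisfies the
GIRS property with constant `c = max_{e ∈ E} ρ(e)`:
for every `A ⊆ V`, `rank T⟨Ā,A⟩ ≤ (max_{e∈E} ρ(e)) · E(A)`. -/
theorem tss_satisfies_girs {F : Type*} [Field F] {V : Type*} [Fintype V] [DecidableEq V]
    (G : SimpleGraph V) (hG : G.IsTree) (m n : V → ℕ) (ρ : V → V → ℕ)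
    (T : Matrix ((i : V) × Fin (m i)) ((j : V) × Fin (n j)) F)
    (hT : Nonempty (TSSRepr G m n ρ T)) (A : Set V) :
    (hankelBlock T A).rank ≤
      ((Finset.univ.filter (fun e : V × V => G.Adj e.1 e.2)).sup (fun e => ρ e.1 e.2))
        * edgeCount G A := by
  classical
  obtain ⟨r⟩ := hT
  have hc : G.Connected := hG.isConnected
  have hac : G.IsAcyclic := hG.2
  set c := ((Finset.univ.filter (fun e : V × V => G.Adj e.1 e.2)).sup
    (fun e => ρ e.1 e.2)) with hcdef
  set S : Finset (V × V) :=
    Finset.univ.filter (fun e : V × V => e.1 ∈ A ∧ e.2 ∉ A ∧ G.Adj e.1 e.2) with hSdef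
  have key : hankelBlock T A = ∑ e ∈ S, Lmat hc r A e * Rmat hc r A e := by
    ext p q
    obtain ⟨⟨i, x⟩, hi⟩ := p
    obtain ⟨⟨j, y⟩, hj⟩ := q
    have hiA : i ∉ A := hi
    have hjA : j ∈ A := hj
    have hij : i ≠ j := fun h => hiA (h ▸ hjA)
    set P : G.Walk j i := ((cpath hc j i : G.Path j i) : G.Walk j i) with hPdef
    have hPpath : P.IsPath := (cpath hc j i).2
    rcases exists_split A P hiA with hall | ⟨a, b, hab, w1, w2, ha, hb, heq, h2⟩
    · exact absurd hjA (hall j P.start_mem_support)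
    have hW : (w1.append (SimpleGraph.Walk.cons hab w2)).IsPath := heq ▸ hPpath
    have hw1 : w1.IsPath := hW.of_append_left
    have hw2 : w2.IsPath := hW.of_append_right.of_cons
    have hbw1 : b ∉ w1.support := by
      have hnd := hW
      rw [SimpleGraph.Walk.isPath_def, SimpleGraph.Walk.support_append,
        SimpleGraph.Walk.support_cons, List.tail_cons] at hnd
      intro hbmem
      exact (List.disjoint_of_nodup_append hnd) hbmem w2.start_mem_support
    have hmemS : (a, b) ∈ S := by
      rw [hSdef, Finset.mem_filter]
      exact ⟨Finset.mem_univ _, ha, hb, hab⟩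
    have hzero : ∀ e ∈ S, e ≠ (a, b) →
        (Lmat hc r A e * Rmat hc r A e) ⟨⟨i, x⟩, hi⟩ ⟨⟨j, y⟩, hj⟩ = 0 := by
      rintro ⟨a', b'⟩ heS hne
      rw [hSdef, Finset.mem_filter] at heS
      obtain ⟨-, ha', hb', hab'⟩ := heS
      by_cases cL : ∀ v ∈ ((cpath hc b' i : G.Path b' i) : G.Walk b' i).support, v ∉ A
      · by_cases cR : b' ∉ ((cpath hc j a' : G.Path j a') : G.Walk j a').support
        · exfalso
          set u1 : G.Walk j a' := ((cpath hc j a' : G.Path j a') : G.Walk j a') with hu1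
          set u2 : G.Walk b' i := ((cpath hc b' i : G.Path b' i) : G.Walk b' i) with hu2
          have ha'u2 : a' ∉ u2.support := fun h => cL a' h ha'
          have hWpath : (u1.append (SimpleGraph.Walk.cons hab' u2)).IsPath :=
            append_cons_isPath hac hab' (cpath hc j a').2 (cpath hc b' i).2 cR ha'u2
          have hWeq : u1.append (SimpleGraph.Walk.cons hab' u2) = P :=
            (cpath_eq hac hc hWpath).symm ▸ rfl
          rw [heq] at hWeq
          obtain ⟨haa, hbb⟩ := split_unique A w1 hab w2 hab' u1 u2 ha ha' h2 cL hWeq.symm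
          exact hne (by rw [haa, hbb])
        · rw [Matrix.mul_apply]
          apply Finset.sum_eq_zero
          intro z _
          have : Rmat hc r A (a', b') z ⟨⟨j, y⟩, hj⟩ = 0 := by
            simp only [Rmat]
            rw [if_neg cR]
          rw [this, mul_zero]
      · rw [Matrix.mul_apply]
        apply Finset.sum_eq_zero
        intro z _
        have : Lmat hc r A (a', b') ⟨⟨i, x⟩, hi⟩ z = 0 := by
          simp only [Lmat]
          rw [if_neg cL]
        rw [this, zero_mul]
    have hcpbi : ((cpath hc b i : G.Path b i) : G.Walk b i) = w2 := cpath_eq hac hc hw2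
    have hcpja : ((cpath hc j a : G.Path j a) : G.Walk j a) = w1 := cpath_eq hac hc hw1
    have hsum : ∀ z, Lmat hc r A (a, b) ⟨⟨i, x⟩, hi⟩ z * Rmat hc r A (a, b) z ⟨⟨j, y⟩, hj⟩
        = outChain r.Out r.Trans b i w2 a x z * inpChain r.Inp r.Trans a b j w1 z y := by
      intro z
      simp only [Lmat, Rmat]
      rw [hcpbi, hcpja, if_pos h2, if_pos hbw1]
    have hofd : blockOf T i j = pathMatrix r.Inp r.Trans r.Out j i P := r.offdiag hij P hPpath
    have hLHS : hankelBlock T A ⟨⟨i, x⟩, hi⟩ ⟨⟨j, y⟩, hj⟩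
        = pathMatrix r.Inp r.Trans r.Out j i P x y := congrFun (congrFun hofd x) y
    rw [Matrix.sum_apply, Finset.sum_eq_single_of_mem (a, b) hmemS hzero,
      Matrix.mul_apply, Finset.sum_congr rfl (fun z _ => hsum z), hLHS, heq,
      pathMatrix_split r.Inp r.Trans r.Out hab w1 w2, Matrix.mul_apply]
  have hcount : edgeCount G A = S.card := by
    rw [edgeCount, Nat.card_eq_fintype_card, Fintype.card_subtype]
  rw [key, hcount]
  calc (∑ e ∈ S, Lmat hc r A e * Rmat hc r A e).rank
      ≤ ∑ e ∈ S, (Lmat hc r A e * Rmat hc r A e).rank := rank_sum_le S _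
    _ ≤ ∑ _e ∈ S, c := by
        refine Finset.sum_le_sum fun e he => ?_
        refine ((Matrix.rank_mul_le_left _ _).trans
          ((Matrix.rank_le_card_width _).trans ?_))
        rw [Fintype.card_fin]
        rw [hSdef, Finset.mem_filter] at he
        exact Finset.le_sup (f := fun e : V × V => ρ e.1 e.2)
          (Finset.mem_filter.2 ⟨Finset.mem_univ _, he.2.2.2⟩)
    _ = S.card * c := by rw [Finset.sum_const, smul_eq_mul]
    _ = c * S.card := Nat.mul_comm _ _

end TSS
end

section
/- Let (T,G) be a graph-partitioned matrix with G = (V,E) a finite connected acyclic undirected graph. Then T admits a TSS representation on G whose rank profile is ρ(e) = rank H_e for every directed edge e, where H_e is the unit Hankel block associated with e. -/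
open Matrix

attribute [local instance] Classical.propDecidable

namespace TSS

variable {F : Type*} [Field F] {V : Type*} [Fintype V] [DecidableEq V]

/-! ### Auxiliary lemmas for the universality theorem -/

section Aux

/-- Rank factorization of a matrix over a field, with a right-invertible right factor. -/
lemma exists_rank_factorization {α β : Type*} [Fintype α] [Fintype β] [DecidableEq β]
    (A : Matrix α β F) :
    ∃ (L : Matrix α (Fin A.rank) F) (R : Matrix (Fin A.rank) β F)
      (R' : Matrix β (Fin A.rank) F), A = L * R ∧ R * R' = 1 := by
  classical
  have hr : Module.finrank F (LinearMap.range A.mulVecLin) = A.rank := rfl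
  let b : Module.Basis (Fin A.rank) F (LinearMap.range A.mulVecLin) :=
    (Module.finBasis F _).reindex (finCongr hr)
  let L : Matrix α (Fin A.rank) F := fun p q => (b q : α → F) p
  have hcol : ∀ j : β, A.mulVecLin (Pi.single j 1) ∈ LinearMap.range A.mulVecLin :=
    fun j => ⟨_, rfl⟩
  let R : Matrix (Fin A.rank) β F := fun q j => b.repr ⟨_, hcol j⟩ q
  have hLR : A = L * R := by
    ext p j
    have h1 := congrArg Subtype.val (b.sum_repr ⟨_, hcol j⟩)
    simp only [AddSubmonoidClass.coe_finset_sum, SetLike.val_smul] at h1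
    have h2 := congrFun h1 p
    simp only [Finset.sum_apply, Pi.smul_apply, smul_eq_mul] at h2
    rw [Matrix.mul_apply]
    calc A p j = A.mulVecLin (Pi.single j 1) p := by
          simp [Matrix.mulVecLin_apply, Matrix.mulVec_single]
      _ = ∑ q, b.repr ⟨_, hcol j⟩ q * (b q : α → F) p := h2.symm
      _ = ∑ q, L p q * R q j := by
          refine Finset.sum_congr rfl fun q _ => ?_
          rw [mul_comm]
  have h1 : A.rank ≤ R.rank := by
    conv_lhs => rw [hLR]
    exact Matrix.rank_mul_le_right L R
  have hRrank : R.rank = A.rank :=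
    le_antisymm (by simpa using Matrix.rank_le_card_height R) h1
  have htop : LinearMap.range R.mulVecLin = ⊤ := by
    apply Submodule.eq_top_of_finrank_eq
    rw [show Module.finrank F ↥(LinearMap.range R.mulVecLin) = R.rank from rfl, hRrank,
      Module.finrank_fin_fun]
  obtain ⟨g, hg⟩ := LinearMap.exists_rightInverse_of_surjective R.mulVecLin htop
  refine ⟨L, R, LinearMap.toMatrix' g, hLR, ?_⟩
  have hcomp : R * LinearMap.toMatrix' g = LinearMap.toMatrix' (R.mulVecLin ∘ₗ g) := by
    rw [LinearMap.toMatrix'_comp,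
      show LinearMap.toMatrix' R.mulVecLin = R from LinearMap.toMatrix'_toLin' R]
  rw [hcomp, hg, LinearMap.toMatrix'_id]

lemma mem_side_refl (G : SimpleGraph V) (i j : V) : i ∈ side G i j :=
  SimpleGraph.Reachable.refl i

lemma not_mem_side_self {G : SimpleGraph V} (hG : G.IsTree) {a b : V} (hab : G.Adj a b) :
    b ∉ side G a b := fun h =>
  ((SimpleGraph.isAcyclic_iff_forall_adj_isBridge.mp hG.IsAcyclic hab) h)

lemma not_mem_side_of_reach {G : SimpleGraph V} (hG : G.IsTree) {a b i : V} (hab : G.Adj a b)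
    (h : (G.deleteEdges {s(a, b)}).Reachable b i) : i ∉ side G a b := fun hi =>
  not_mem_side_self hG hab (hi.trans h.symm)

lemma reach_of_mem_support {H : SimpleGraph V} {a v u : V} (w : H.Walk a v)
    (hu : u ∈ w.support) : H.Reachable a u := ⟨w.takeUntil u hu⟩

lemma not_mem_side_of_walk {G : SimpleGraph V} (hG : G.IsTree) {j k i : V} (hjk : G.Adj j k)
    (w : G.Walk k i) (hj : j ∉ w.support) : i ∉ side G j k := by
  have he : ∀ e ∈ w.edges, e ∉ ({s(j, k)} : Set (Sym2 V)) := by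
    intro e hew hes
    rw [Set.mem_singleton_iff] at hes
    subst hes
    exact hj (w.fst_mem_support_of_mem_edges hew)
  exact not_mem_side_of_reach hG hjk ⟨w.toDeleteEdges _ he⟩

lemma side_subset_side {G : SimpleGraph V} (hG : G.IsTree) {j k i : V} (hjk : G.Adj j k)
    (hki : G.Adj k i) (hji : j ≠ i) : side G j k ⊆ side G k i := by
  intro v hv
  obtain ⟨w⟩ := hv
  have hkn : k ∉ w.support := fun hk =>
    not_mem_side_self hG hjk (reach_of_mem_support w hk)
  have hedges : ∀ e ∈ w.edges, e ∈ (G.deleteEdges {s(k, i)}).edgeSet := by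
    intro e he
    have h1 := w.edges_subset_edgeSet he
    rw [SimpleGraph.edgeSet_deleteEdges] at h1 ⊢
    refine ⟨h1.1, fun hek => ?_⟩
    rw [Set.mem_singleton_iff] at hek
    subst hek
    exact hkn (w.fst_mem_support_of_mem_edges he)
  have hreach : (G.deleteEdges {s(k, i)}).Reachable j v := ⟨w.transfer _ hedges⟩
  have hkj : (G.deleteEdges {s(k, i)}).Adj k j := by
    rw [SimpleGraph.deleteEdges_adj]
    refine ⟨hjk.symm, fun hmem => ?_⟩
    rw [Set.mem_singleton_iff, Sym2.eq_iff] at hmem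
    rcases hmem with ⟨-, h2⟩ | ⟨-, h2⟩
    · exact hji h2
    · exact hjk.ne h2
  exact hkj.reachable.trans hreach

variable (G : SimpleGraph V) {m n : V → ℕ}
  (T : Matrix ((i : V) × Fin (m i)) ((j : V) × Fin (n j)) F)

/-- The edge-to-output generators built from left rank factors. -/
noncomputable def mkOut
    (Lf : ∀ j k : V, Matrix {p : (i : V) × Fin (m i) // p.1 ∈ (side G j k)ᶜ}
      (Fin ((unitHankel G T j k).rank)) F) :
    ∀ k i : V, Matrix (Fin (m k)) (Fin ((unitHankel G T i k).rank)) F := fun k i =>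
  if h : k ∈ (side G i k)ᶜ then (Lf i k).submatrix (fun a => ⟨⟨k, a⟩, h⟩) id else 0

/-- The input-to-edge generators built from right rank factors. -/
noncomputable def mkInp
    (Rf : ∀ j k : V, Matrix (Fin ((unitHankel G T j k).rank))
      {q : (i : V) × Fin (n i) // q.1 ∈ side G j k} F) :
    ∀ k j : V, Matrix (Fin ((unitHankel G T k j).rank)) (Fin (n k)) F := fun k j =>
  (Rf k j).submatrix id (fun b => ⟨⟨k, b⟩, mem_side_refl G k j⟩)

/-- The transition generators built from right rank factors and their right inverses. -/
noncomputable def mkTrans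
    (Rf : ∀ j k : V, Matrix (Fin ((unitHankel G T j k).rank))
      {q : (i : V) × Fin (n i) // q.1 ∈ side G j k} F)
    (Ri : ∀ j k : V, Matrix {q : (i : V) × Fin (n i) // q.1 ∈ side G j k}
      (Fin ((unitHankel G T j k).rank)) F) :
    ∀ k i j : V, Matrix (Fin ((unitHankel G T k i).rank))
      (Fin ((unitHankel G T j k).rank)) F := fun k i j =>
  if h : side G j k ⊆ side G k i then
    (Rf k i).submatrix id (fun q => ⟨q.1, h q.2⟩) * Ri j k
  else 0

/-- Key induction: the `outChain` along a path reproduces the left rank factor. -/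
lemma outChain_mk (hG : G.IsTree)
    (Lf : ∀ j k : V, Matrix {p : (i : V) × Fin (m i) // p.1 ∈ (side G j k)ᶜ}
      (Fin ((unitHankel G T j k).rank)) F)
    (Rf : ∀ j k : V, Matrix (Fin ((unitHankel G T j k).rank))
      {q : (i : V) × Fin (n i) // q.1 ∈ side G j k} F)
    (Ri : ∀ j k : V, Matrix {q : (i : V) × Fin (n i) // q.1 ∈ side G j k}
      (Fin ((unitHankel G T j k).rank)) F)
    (hLR : ∀ j k, unitHankel G T j k = Lf j k * Rf j k)
    (hRi : ∀ j k, Rf j k * Ri j k = 1) :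
    ∀ (k i : V) (w : G.Walk k i), w.IsPath → ∀ j : V, G.Adj j k → j ∉ w.support →
      ∀ (hi : i ∈ (side G j k)ᶜ) (a : Fin (m i)) (c : Fin ((unitHankel G T j k).rank)),
      outChain (G := G) (mkOut G T Lf) (mkTrans G T Rf Ri) k i w j a c
        = Lf j k ⟨⟨i, a⟩, hi⟩ c := by
  intro k i w
  induction w with
  | nil =>
    intro _ j hjk _ hi a c
    simp only [outChain, mkOut, dif_pos hi]
    rfl
  | @cons k v i h p ih =>
    intro hp j hjk hjs hi a c
    have hp' : p.IsPath := ((SimpleGraph.Walk.cons_isPath_iff h p).mp hp).1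
    have hknp : k ∉ p.support := ((SimpleGraph.Walk.cons_isPath_iff h p).mp hp).2
    have hjs' : j ∉ p.support := fun hj => hjs
      (by rw [SimpleGraph.Walk.support_cons]; exact List.mem_cons_of_mem _ hj)
    have hjv : j ≠ v := fun hj => hjs
      (by rw [SimpleGraph.Walk.support_cons]
          exact List.mem_cons_of_mem _ (hj ▸ p.start_mem_support))
    have hvi : i ∈ (side G k v)ᶜ := not_mem_side_of_walk hG h p hknp
    have hsub : side G j k ⊆ side G k v := side_subset_side hG hjk h hjv
    simp only [outChain, mkTrans, dif_pos hsub]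
    rw [Matrix.mul_apply]
    calc ∑ d, outChain (G := G) (mkOut G T Lf) (mkTrans G T Rf Ri) v i p k a d *
            ((Rf k v).submatrix id (fun q : {q : (i : V) × Fin (n i) // q.1 ∈ side G j k} =>
              (⟨q.1, hsub q.2⟩ : {q : (i : V) × Fin (n i) // q.1 ∈ side G k v})) * Ri j k) d c
        = ∑ d, Lf k v ⟨⟨i, a⟩, hvi⟩ d *
            (∑ q' : {q : (i : V) × Fin (n i) // q.1 ∈ side G j k},
              Rf k v d ⟨q'.1, hsub q'.2⟩ * Ri j k q' c) := by
          refine Finset.sum_congr rfl fun d _ => ?_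
          rw [ih hp' k h hknp hvi a d, Matrix.mul_apply]
          rfl
      _ = ∑ q' : {q : (i : V) × Fin (n i) // q.1 ∈ side G j k},
            (∑ d, Lf k v ⟨⟨i, a⟩, hvi⟩ d * Rf k v d ⟨q'.1, hsub q'.2⟩) * Ri j k q' c := by
          simp only [Finset.mul_sum, Finset.sum_mul, mul_assoc]
          exact Finset.sum_comm
      _ = ∑ q' : {q : (i : V) × Fin (n i) // q.1 ∈ side G j k},
            unitHankel G T j k ⟨⟨i, a⟩, hi⟩ q' * Ri j k q' c := by
          refine Finset.sum_congr rfl fun q' _ => ?_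
          congr 1
          rw [← Matrix.mul_apply, ← hLR k v]
          rfl
      _ = ∑ q' : {q : (i : V) × Fin (n i) // q.1 ∈ side G j k},
            (Lf j k * Rf j k) ⟨⟨i, a⟩, hi⟩ q' * Ri j k q' c := by
          rw [← hLR j k]
      _ = ((Lf j k * Rf j k) * Ri j k) ⟨⟨i, a⟩, hi⟩ c := (Matrix.mul_apply).symm
      _ = Lf j k ⟨⟨i, a⟩, hi⟩ c := by
          rw [Matrix.mul_assoc, hRi j k, Matrix.mul_one]

end Aux

/-- universality, existence part: every graph-partitioned matrix `T` on a
tree `G` admits a TSS representation whose rank profile is `ρ(e) = rank H_e` for every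
directed edge `e`, where `H_e` is the unit Hankel block associated with `e`. -/
theorem tss_universality {F : Type*} [Field F] {V : Type*} [Fintype V] [DecidableEq V]
    (G : SimpleGraph V) (hG : G.IsTree) (m n : V → ℕ)
    (T : Matrix ((i : V) × Fin (m i)) ((j : V) × Fin (n j)) F) :
    Nonempty (TSSRepr G m n (fun i j => (unitHankel G T i j).rank) T) := by
  classical
  have hex : ∀ j k : V,
      ∃ (L : Matrix {p : (i : V) × Fin (m i) // p.1 ∈ (side G j k)ᶜ}
        (Fin ((unitHankel G T j k).rank)) F)
        (R : Matrix (Fin ((unitHankel G T j k).rank))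
          {q : (i : V) × Fin (n i) // q.1 ∈ side G j k} F)
        (R' : Matrix {q : (i : V) × Fin (n i) // q.1 ∈ side G j k}
          (Fin ((unitHankel G T j k).rank)) F),
        unitHankel G T j k = L * R ∧ R * R' = 1 :=
    fun j k => exists_rank_factorization (unitHankel G T j k)
  choose Lf Rf Ri hLR hRi using hex
  refine ⟨⟨fun k => blockOf T k k, mkInp G T Rf, mkTrans G T Rf Ri, mkOut G T Lf,
    fun i => rfl, ?_⟩⟩
  intro i j hij w hw
  cases w with
  | nil => exact absurd rfl hij
  | @cons _ v _ h p =>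
    have hp' : p.IsPath := ((SimpleGraph.Walk.cons_isPath_iff h p).mp hw).1
    have hjs : j ∉ p.support := ((SimpleGraph.Walk.cons_isPath_iff h p).mp hw).2
    have hi : i ∈ (side G j v)ᶜ := not_mem_side_of_walk hG h p hjs
    ext a b
    show T ⟨i, a⟩ ⟨j, b⟩ = pathMatrix (mkInp G T Rf) (mkTrans G T Rf Ri) (mkOut G T Lf)
      j i (SimpleGraph.Walk.cons h p) a b
    simp only [pathMatrix, Matrix.mul_apply]
    calc T ⟨i, a⟩ ⟨j, b⟩
        = unitHankel G T j v ⟨⟨i, a⟩, hi⟩ ⟨⟨j, b⟩, mem_side_refl G j v⟩ := rfl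
      _ = (Lf j v * Rf j v) ⟨⟨i, a⟩, hi⟩ ⟨⟨j, b⟩, mem_side_refl G j v⟩ := by rw [← hLR]
      _ = ∑ d, Lf j v ⟨⟨i, a⟩, hi⟩ d * Rf j v d ⟨⟨j, b⟩, mem_side_refl G j v⟩ :=
          Matrix.mul_apply
      _ = ∑ d, outChain (G := G) (mkOut G T Lf) (mkTrans G T Rf Ri) v i p j a d *
            mkInp G T Rf j v d b := by
          refine Finset.sum_congr rfl fun d _ => ?_
          rw [outChain_mk G T hG Lf Rf Ri hLR hRi v i p hp' j h hjs hi a d]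
          rfl

end TSS
end

section
/- Let T₁, T₂ ∈ F^{M×N}, with M = Σ_{i∈V} m_i and N = Σ_{i∈V} n_i, be TSS matrices on the same finite connected acyclic undirected graph G = (V,E) with rank profiles ρ₁ and ρ₂ respectively. Then T₃ = T₁ + T₂ admits a TSS representation on G with rank profile e ↦ ρ₁(e) + ρ₂(e). -/
open Matrix

attribute [local instance] Classical.propDecidable

namespace TSS

variable {F : Type*} [Field F] {V : Type*} [Fintype V] [DecidableEq V]

/-- TSS addition: if `T₁, T₂` are TSS matrices on the same tree `G` with
rank profiles `ρ₁, ρ₂`, then `T₁ + T₂` admits a TSS representation on `G` with rank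
profile `e ↦ ρ₁(e) + ρ₂(e)`. -/
theorem tss_add {F : Type*} [Field F] {V : Type*} [Fintype V] [DecidableEq V]
    (G : SimpleGraph V) (hG : G.IsTree) (m n : V → ℕ) (ρ₁ ρ₂ : V → V → ℕ)
    (T₁ T₂ : Matrix ((i : V) × Fin (m i)) ((j : V) × Fin (n j)) F)
    (h₁ : Nonempty (TSSRepr G m n ρ₁ T₁)) (h₂ : Nonempty (TSSRepr G m n ρ₂ T₂)) :
    Nonempty (TSSRepr G m n (fun i j => ρ₁ i j + ρ₂ i j) (T₁ + T₂)) := by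
  obtain ⟨R₁⟩ := h₁
  obtain ⟨R₂⟩ := h₂
  set e : ∀ a b : ℕ, Fin (a + b) ≃ Fin a ⊕ Fin b := fun a b => (finSumFinEquiv).symm with he
  refine ⟨{
    D := fun k => R₁.D k + R₂.D k
    Inp := fun k j => (fromRows (R₁.Inp k j) (R₂.Inp k j)).submatrix (e _ _) id
    Trans := fun k i j => (fromBlocks (R₁.Trans k i j) 0 0 (R₂.Trans k i j)).submatrix (e _ _) (e _ _)
    Out := fun k i => (fromCols (R₁.Out k i) (R₂.Out k i)).submatrix id (e _ _)
    diag := ?_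
    offdiag := ?_ }⟩
  · intro i
    show blockOf (T₁ + T₂) i i = R₁.D i + R₂.D i
    rw [← R₁.diag i, ← R₂.diag i]
    rfl
  · intro i j hij w hw
    have key : ∀ (k i : V) (w : G.Walk k i) (j : V),
        outChain (F := F) (m := m) (ρ := fun a b => ρ₁ a b + ρ₂ a b)
          (fun k i => (fromCols (R₁.Out k i) (R₂.Out k i)).submatrix id (e _ _))
          (fun k i j => (fromBlocks (R₁.Trans k i j) 0 0 (R₂.Trans k i j)).submatrix (e _ _) (e _ _))
          k i w j =
        (fromCols (outChain R₁.Out R₁.Trans k i w j)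
          (outChain R₂.Out R₂.Trans k i w j)).submatrix id (e _ _) := by
      intro k i w
      induction w with
      | nil => intro j; rfl
      | cons h w ih =>
        intro j
        rw [outChain, outChain, outChain, ih]
        rw [Matrix.submatrix_mul_equiv, fromCols_mul_fromBlocks]
        simp
    cases w with
    | nil => exact absurd rfl hij
    | @cons _ p1 _ h w =>
      have hb : blockOf (T₁ + T₂) i j = blockOf T₁ i j + blockOf T₂ i j := rfl
      rw [hb, R₁.offdiag hij (.cons h w) hw, R₂.offdiag hij (.cons h w) hw,
        pathMatrix, pathMatrix, pathMatrix, key, Matrix.submatrix_mul_equiv,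
        fromCols_mul_fromRows]
      rfl


end TSS
end

section
/- Let (T,G) be a graph-partitioned matrix with G = (V,E) a finite connected acyclic undirected graph, and let c > 0. Then (T,G) satisfies the GIRS property with constant c, i.e., rank T⟨Ā,A⟩ ≤ c · E(A) for all A ⊆ V, if and only if every unit Hankel block of T has rank at most c, i.e., rank H_e ≤ c for every directed edge e of G. -/
open Matrix

attribute [local instance] Classical.propDecidable

namespace TSS

variable {F : Type*} [Field F] {V : Type*} [Fintype V] [DecidableEq V]

section Aux

variable {F : Type*} [Field F]

lemma finrank_finsetSup_le {K E : Type*} [Field K] [AddCommGroup E] [Module K E]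
    [FiniteDimensional K E] {ι : Type*} [DecidableEq ι] (s : Finset ι) (W : ι → Submodule K E) :
    Module.finrank K ↥(s.sup W) ≤ ∑ i ∈ s, Module.finrank K ↥(W i) := by
  induction s using Finset.induction with
  | empty => simp
  | insert _ _ h ih =>
    rw [Finset.sup_insert, Finset.sum_insert h]
    exact (Submodule.finrank_add_le_finrank_add_finrank _ _).trans (Nat.add_le_add_left ih _)

lemma rank_submatrix_cols_le {R D D' : Type*} [Fintype R] [Fintype D] [Fintype D']
    (N : Matrix R D F) (h : D' → D) : (N.submatrix id h).rank ≤ N.rank := by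
  rw [Matrix.rank_eq_finrank_span_cols, Matrix.rank_eq_finrank_span_cols]
  apply Submodule.finrank_mono
  apply Submodule.span_le.2
  rintro x ⟨d, rfl⟩
  exact Submodule.subset_span ⟨h d, rfl⟩

/-- Rank of a submatrix (arbitrary row and column maps) is at most the rank. -/
lemma rank_submatrix_le_general {R C R' C' : Type*} [Fintype R] [Fintype C] [Fintype R']
    [Fintype C'] (M : Matrix R C F) (f : R' → R) (g : C' → C) :
    (M.submatrix f g).rank ≤ M.rank := by
  have rowcase : (M.submatrix f id).rank ≤ M.rank := by
    rw [← Matrix.rank_transpose (M.submatrix f id), ← Matrix.rank_transpose M,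
      Matrix.transpose_submatrix]
    exact rank_submatrix_cols_le Mᵀ f
  have e1 : M.submatrix f g = (M.submatrix f id).submatrix id g := by
    simp [Matrix.submatrix_submatrix]
  rw [e1]
  exact le_trans (rank_submatrix_cols_le (M.submatrix f id) g) rowcase

/-- If the columns of `M` are covered by the sets `S i`, then the rank of `M` is at most the
sum of the ranks of the corresponding column submatrices. -/
lemma rank_le_sum_cover_cols {R C ι : Type*} [Fintype R] [Fintype C] [Fintype ι]
    (M : Matrix R C F) (S : ι → Set C) (hcov : ∀ c, ∃ i, c ∈ S i) :
    M.rank ≤ ∑ i, (M.submatrix id (fun q : S i => (q : C))).rank := by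
  classical
  set W : ι → Submodule F (R → F) := fun i =>
    Submodule.span F (Set.range (M.submatrix id (fun q : S i => (q : C)))ᵀ) with hW
  have key : Submodule.span F (Set.range Mᵀ) ≤ Finset.univ.sup W := by
    apply Submodule.span_le.2
    rintro x ⟨c, rfl⟩
    obtain ⟨i, hi⟩ := hcov c
    have hx : Mᵀ c ∈ W i := Submodule.subset_span ⟨⟨c, hi⟩, rfl⟩
    exact (Finset.le_sup (f := W) (Finset.mem_univ i)) hx
  calc M.rank = Module.finrank F ↥(Submodule.span F (Set.range Mᵀ)) :=
        Matrix.rank_eq_finrank_span_cols M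
    _ ≤ Module.finrank F ↥(Finset.univ.sup W) := Submodule.finrank_mono key
    _ ≤ ∑ i, Module.finrank F ↥(W i) := finrank_finsetSup_le _ _
    _ = ∑ i, (M.submatrix id (fun q : S i => (q : C))).rank := by
        refine Finset.sum_congr rfl fun i _ => ?_
        rw [hW, Matrix.rank_eq_finrank_span_cols]
        rfl

/-- Row version. -/
lemma rank_le_sum_cover_rows {R C ι : Type*} [Fintype R] [Fintype C] [Fintype ι]
    (M : Matrix R C F) (S : ι → Set R) (hcov : ∀ r, ∃ i, r ∈ S i) :
    M.rank ≤ ∑ i, (M.submatrix (fun p : S i => (p : R)) id).rank := by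
  rw [← Matrix.rank_transpose M]
  calc Mᵀ.rank ≤ ∑ i, (Mᵀ.submatrix id (fun p : S i => (p : R))).rank :=
        rank_le_sum_cover_cols Mᵀ S hcov
    _ = ∑ i, (M.submatrix (fun p : S i => (p : R)) id).rank := by
        refine Finset.sum_congr rfl fun i _ => ?_
        rw [← Matrix.transpose_submatrix, Matrix.rank_transpose]


variable {V : Type*} [Fintype V] [DecidableEq V] (G : SimpleGraph V)

lemma mem_side_self (i j : V) : i ∈ side G i j := SimpleGraph.Reachable.refl i

lemma side_mono_adj {i j x y : V} (hx : x ∈ side G i j) (hadj : G.Adj x y)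
    (hne : s(x, y) ≠ s(i, j)) : y ∈ side G i j :=
  (hx : (G.deleteEdges {s(i, j)}).Reachable i x).trans
    (SimpleGraph.Adj.reachable (SimpleGraph.deleteEdges_adj.mpr ⟨hadj, by simpa using hne⟩))

lemma not_mem_side (hG : G.IsTree) {i j : V} (hadj : G.Adj i j) : j ∉ side G i j := by
  have hb : G.IsBridge s(i, j) :=
    (SimpleGraph.isAcyclic_iff_forall_edge_isBridge.mp hG.2) ((SimpleGraph.mem_edgeSet G).mpr hadj)
  exact fun h => (SimpleGraph.isBridge_iff.mp hb) h

lemma side_disjoint (hG : G.IsTree) {i j w : V} (hadj : G.Adj i j)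
    (h1 : w ∈ side G i j) (h2 : w ∈ side G j i) : False := by
  have h2' : (G.deleteEdges {s(i, j)}).Reachable j w := by
    have : s(j, i) = s(i, j) := Sym2.eq_swap
    rw [side, this] at h2
    exact h2
  exact not_mem_side G hG hadj ((h1 : (G.deleteEdges {s(i, j)}).Reachable i w).trans h2'.symm)

/-- The graph `G` restricted to `A`. -/
def restrict (A : Set V) : SimpleGraph V where
  Adj x y := G.Adj x y ∧ x ∈ A ∧ y ∈ A
  symm := ⟨fun x y ⟨h, hx, hy⟩ => ⟨h.symm, hy, hx⟩⟩
  loopless := ⟨fun x ⟨h, _, _⟩ => G.loopless.irrefl x h⟩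

/-- The connected component of `a` within `A`. -/
def comp (A : Set V) (a : V) : Set V := {w | (restrict G A).Reachable a w}

lemma mem_comp_self (A : Set V) (a : V) : a ∈ comp G A a := SimpleGraph.Reachable.refl a

lemma comp_subset {A : Set V} {a : V} (ha : a ∈ A) : comp G A a ⊆ A := by
  have step : ∀ x w : V, (restrict G A).Walk x w → x ∈ A → w ∈ A := by
    intro x w p
    induction p with
    | nil => exact id
    | @cons x y w h p ih => exact fun _ => ih h.2.2
  intro w hw
  obtain ⟨p⟩ := (hw : (restrict G A).Reachable a w)
  exact step a w p ha

lemma comp_closed {A : Set V} {a : V} (ha : a ∈ A) {u v : V} (hu : u ∈ comp G A a)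
    (hv : v ∈ A) (hadj : G.Adj u v) : v ∈ comp G A a :=
  (hu : (restrict G A).Reachable a u).trans
    (SimpleGraph.Adj.reachable (⟨hadj, comp_subset G ha hu, hv⟩ : (restrict G A).Adj u v))

lemma comp_subset_side {A : Set V} {a : V} (ha : a ∈ A) {u v : V} (hu : u ∈ comp G A a)
    (hv : v ∉ A) (hadj : G.Adj u v) : comp G A a ⊆ side G u v := by
  have step : ∀ x w : V, (restrict G A).Walk x w → x ∈ side G u v → w ∈ side G u v := by
    intro x w p
    induction p with
    | nil => exact fun h => h
    | @cons x y w h p ih =>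
      intro hx
      refine ih (side_mono_adj G hx h.1 fun heq => ?_)
      rcases Sym2.eq_iff.mp heq with ⟨rfl, rfl⟩ | ⟨rfl, rfl⟩
      · exact hv h.2.2
      · exact hv h.2.1
  intro w hw
  obtain ⟨p⟩ := ((hu : (restrict G A).Reachable a u).symm.trans hw)
  exact step u w p (mem_side_self G u v)

lemma exists_border (hG : G.IsTree) {A : Set V} {a : V} (ha : a ∈ A) {q : V}
    (hq : q ∉ comp G A a) :
    ∃ x y : V, x ∈ comp G A a ∧ y ∉ comp G A a ∧ G.Adj x y ∧ q ∈ side G y x := by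
  have step : ∀ (q b : V), G.Walk q b → b ∈ comp G A a → q ∉ comp G A a →
      ∃ x y : V, x ∈ comp G A a ∧ y ∉ comp G A a ∧ G.Adj x y ∧ q ∈ side G y x := by
    intro q b p
    induction p with
    | nil => exact fun hb hq' => absurd hb hq'
    | @cons q z b h p ih =>
      intro hb hq'
      by_cases hz : z ∈ comp G A a
      · exact ⟨z, q, hz, hq', h.symm, mem_side_self G q z⟩
      · obtain ⟨x, y, hx, hy, hxy, hzside⟩ := ih hb hz
        refine ⟨x, y, hx, hy, hxy, side_mono_adj G hzside h.symm fun heq => ?_⟩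
        rcases Sym2.eq_iff.mp heq with ⟨rfl, rfl⟩ | ⟨rfl, rfl⟩
        · exact hq' hx
        · exact hz hx
  obtain ⟨p⟩ := hG.1.preconnected q a
  exact step q a p (mem_comp_self G A a) hq

lemma edgeCount_side (G : SimpleGraph V) (hG : G.IsTree) {i j : V} (hadj : G.Adj i j) :
    edgeCount G (side G i j) = 1 := by
  rw [edgeCount, Nat.card_eq_one_iff_exists]
  refine ⟨⟨(i, j), mem_side_self G i j, not_mem_side G hG hadj, hadj⟩, ?_⟩
  rintro ⟨⟨x, y⟩, hx, hy, hxy⟩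
  apply Subtype.ext
  by_cases he : s(x, y) = s(i, j)
  · rcases Sym2.eq_iff.mp he with ⟨rfl, rfl⟩ | ⟨rfl, rfl⟩
    · rfl
    · exact absurd hx (not_mem_side G hG hadj)
  · exact absurd (side_mono_adj G hx hxy he) hy

lemma edgeCount_comp_add_le (G : SimpleGraph V) {A : Set V} {a : V} (ha : a ∈ A) :
    edgeCount G (comp G A a) + edgeCount G {x | x ∈ A ∧ x ∉ comp G A a} ≤ edgeCount G A := by
  set A₀ := comp G A a with hA₀
  set A₁ : Set V := {x | x ∈ A ∧ x ∉ A₀} with hA₁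
  have mem₀ : ∀ e : V × V, e.1 ∈ A₀ ∧ e.2 ∉ A₀ ∧ G.Adj e.1 e.2 →
      e.1 ∈ A ∧ e.2 ∉ A ∧ G.Adj e.1 e.2 := by
    rintro ⟨x, y⟩ ⟨hx, hy, hxy⟩
    exact ⟨comp_subset G ha hx, fun hyA => hy (comp_closed G ha hx hyA hxy), hxy⟩
  have mem₁ : ∀ e : V × V, e.1 ∈ A₁ ∧ e.2 ∉ A₁ ∧ G.Adj e.1 e.2 →
      e.1 ∈ A ∧ e.2 ∉ A ∧ G.Adj e.1 e.2 := by
    rintro ⟨x, y⟩ ⟨hx, hy, hxy⟩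
    refine ⟨hx.1, fun hyA => ?_, hxy⟩
    by_cases hy0 : y ∈ A₀
    · exact hx.2 (comp_closed G ha hy0 hx.1 hxy.symm)
    · exact hy ⟨hyA, hy0⟩
  rw [edgeCount, edgeCount, edgeCount, ← Nat.card_sum]
  apply Nat.card_le_card_of_injective
    (Sum.elim (fun e => ⟨e.1, mem₀ e.1 e.2⟩) (fun e => ⟨e.1, mem₁ e.1 e.2⟩) :
      _ ⊕ _ → {e : V × V // e.1 ∈ A ∧ e.2 ∉ A ∧ G.Adj e.1 e.2})
  rintro (e | e) (e' | e') h
  · simp only [Sum.elim_inl, Subtype.mk.injEq] at h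
    exact congrArg Sum.inl (Subtype.ext h)
  · simp only [Sum.elim_inl, Sum.elim_inr, Subtype.mk.injEq] at h
    exact absurd (h ▸ e.2.1) e'.2.1.2
  · simp only [Sum.elim_inl, Sum.elim_inr, Subtype.mk.injEq] at h
    exact absurd (h ▸ e'.2.1) e.2.1.2
  · simp only [Sum.elim_inr, Subtype.mk.injEq] at h
    exact congrArg Sum.inr (Subtype.ext h)

lemma hankel_empty_rank {F : Type*} [Field F] {m n : V → ℕ}
    (T : Matrix ((i : V) × Fin (m i)) ((j : V) × Fin (n j)) F) (A : Set V) (hA : ∀ x, x ∉ A) :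
    (hankelBlock T A).rank = 0 := by
  haveI : IsEmpty {q : (j : V) × Fin (n j) // q.1 ∈ A} := ⟨fun q => hA _ q.2⟩
  exact le_antisymm (le_trans (Matrix.rank_le_card_width _) (by simp)) (Nat.zero_le _)

lemma comp_bound {F : Type*} [Field F] {m n : V → ℕ}
    (T : Matrix ((i : V) × Fin (m i)) ((j : V) × Fin (n j)) F)
    {G : SimpleGraph V} (hG : G.IsTree) {c : ℕ}
    (hH : ∀ i j : V, G.Adj i j → (unitHankel G T i j).rank ≤ c)
    {A : Set V} {a : V} (ha : a ∈ A) :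
    (hankelBlock T (comp G A a)).rank ≤ c * edgeCount G (comp G A a) := by
  classical
  set A₀ := comp G A a with hA₀
  let ι := {e : V × V // e.1 ∈ A₀ ∧ e.2 ∉ A₀ ∧ G.Adj e.1 e.2}
  let S : ι → Set {p : (i : V) × Fin (m i) // p.1 ∈ A₀ᶜ} :=
    fun e => {p | p.1.1 ∈ side G e.1.2 e.1.1}
  have hcov : ∀ r, ∃ e, r ∈ S e := by
    intro r
    obtain ⟨x, y, hx, hy, hxy, hside⟩ := exists_border G hG ha r.2
    exact ⟨⟨(x, y), hx, hy, hxy⟩, hside⟩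
  refine le_trans (rank_le_sum_cover_rows (hankelBlock T A₀) S hcov) ?_
  have hbound : ∀ e : ι,
      ((hankelBlock T A₀).submatrix (fun p : S e => (p : _)) id).rank ≤ c := by
    rintro ⟨⟨u, v⟩, hu, hv, huv⟩
    have hvA : v ∉ A := fun hvA => hv (comp_closed G ha hu hvA huv)
    have hsub : A₀ ⊆ side G u v := comp_subset_side G ha hu hvA huv
    have key :
        ((hankelBlock T A₀).submatrix
            (fun p : S ⟨(u, v), hu, hv, huv⟩ => (p : {p : (i : V) × Fin (m i) // p.1 ∈ A₀ᶜ}))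
            id) =
          (unitHankel G T u v).submatrix
            (fun p : S ⟨(u, v), hu, hv, huv⟩ =>
              (⟨p.1.1, fun hmem => side_disjoint G hG huv hmem p.2⟩ :
                {q : (i : V) × Fin (m i) // q.1 ∈ (side G u v)ᶜ}))
            (fun q : {q : (j : V) × Fin (n j) // q.1 ∈ A₀} => ⟨q.1, hsub q.2⟩) := rfl
    rw [key]
    exact le_trans (rank_submatrix_le_general _ _ _) (hH u v huv)
  calc ∑ e : ι, ((hankelBlock T A₀).submatrix (fun p : S e => (p : _)) id).rank
      ≤ ∑ _e : ι, c := Finset.sum_le_sum fun e _ => hbound e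
    _ = Fintype.card ι * c := by rw [Finset.sum_const, Finset.card_univ, smul_eq_mul]
    _ = c * edgeCount G A₀ := by rw [edgeCount, Nat.card_eq_fintype_card, mul_comm]

lemma girs_of_unit {F : Type*} [Field F] {m n : V → ℕ}
    (T : Matrix ((i : V) × Fin (m i)) ((j : V) × Fin (n j)) F)
    {G : SimpleGraph V} (hG : G.IsTree) {c : ℕ}
    (hH : ∀ i j : V, G.Adj i j → (unitHankel G T i j).rank ≤ c)
    (A : Set V) : (hankelBlock T A).rank ≤ c * edgeCount G A := by
  classical
  suffices h : ∀ (N : ℕ) (A : Set V), A.ncard ≤ N →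
      (hankelBlock T A).rank ≤ c * edgeCount G A from h A.ncard A le_rfl
  intro N
  induction N with
  | zero =>
    intro A hA
    have hemp : A = ∅ := by
      rw [Nat.le_zero] at hA
      exact (Set.ncard_eq_zero (Set.toFinite A)).mp hA
    rw [hankel_empty_rank T A (fun x hx => by rw [hemp] at hx; exact hx)]
    exact Nat.zero_le _
  | succ N ih =>
    intro A hA
    rcases Set.eq_empty_or_nonempty A with rfl | ⟨a, ha⟩
    · rw [hankel_empty_rank T ∅ (fun x hx => hx)]; exact Nat.zero_le _
    set A₀ := comp G A a with hA₀
    set A₁ : Set V := {x | x ∈ A ∧ x ∉ A₀} with hA₁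
    let S : Bool → Set {q : (j : V) × Fin (n j) // q.1 ∈ A} :=
      fun b => {q | q.1.1 ∈ (bif b then A₀ else A₁)}
    have hcov : ∀ q, ∃ b, q ∈ S b := by
      intro q
      by_cases hq : q.1.1 ∈ A₀
      · exact ⟨true, hq⟩
      · exact ⟨false, ⟨q.2, hq⟩⟩
    have main := rank_le_sum_cover_cols (hankelBlock T A) S hcov
    rw [Fintype.sum_bool] at main
    have h0 : ((hankelBlock T A).submatrix id
        (fun q : S true => (q : {q : (j : V) × Fin (n j) // q.1 ∈ A}))).rank
          ≤ c * edgeCount G A₀ := by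
      have key : ((hankelBlock T A).submatrix id
          (fun q : S true => (q : {q : (j : V) × Fin (n j) // q.1 ∈ A}))) =
            (hankelBlock T A₀).submatrix
              (fun p : {p : (i : V) × Fin (m i) // p.1 ∈ Aᶜ} =>
                (⟨p.1, fun hp => p.2 (comp_subset G ha hp)⟩ :
                  {p : (i : V) × Fin (m i) // p.1 ∈ A₀ᶜ}))
              (fun q : S true => ⟨q.1.1, q.2⟩) := rfl
      rw [key]
      exact le_trans (rank_submatrix_le_general _ _ _) (comp_bound T hG hH ha)
    have h1 : ((hankelBlock T A).submatrix id
        (fun q : S false => (q : {q : (j : V) × Fin (n j) // q.1 ∈ A}))).rank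
          ≤ c * edgeCount G A₁ := by
      have key : ((hankelBlock T A).submatrix id
          (fun q : S false => (q : {q : (j : V) × Fin (n j) // q.1 ∈ A}))) =
            (hankelBlock T A₁).submatrix
              (fun p : {p : (i : V) × Fin (m i) // p.1 ∈ Aᶜ} =>
                (⟨p.1, fun hp => p.2 hp.1⟩ :
                  {p : (i : V) × Fin (m i) // p.1 ∈ A₁ᶜ}))
              (fun q : S false => ⟨q.1.1, q.2⟩) := rfl
      rw [key]
      refine le_trans (rank_submatrix_le_general _ _ _) ?_
      have hcard : A₁.ncard ≤ N := ?_
      · have hih := ih A₁ hcard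
        convert hih using 2
        rfl
      have hssub : A₁ ⊂ A := by
        refine ⟨fun x hx => hx.1, fun hsub => ?_⟩
        exact (hsub ha).2 (mem_comp_self G A a)
      have hlt : A₁.ncard < A.ncard := Set.ncard_lt_ncard hssub (Set.toFinite A)
      omega
    calc (hankelBlock T A).rank ≤ _ + _ := main
      _ ≤ c * edgeCount G A₀ + c * edgeCount G A₁ := Nat.add_le_add h0 h1
      _ = c * (edgeCount G A₀ + edgeCount G A₁) := (Nat.mul_add c _ _).symm
      _ ≤ c * edgeCount G A := Nat.mul_le_mul_left c (edgeCount_comp_add_le G ha)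

end Aux

/-- `(T,G)` (with `G` a tree) satisfies the GIRS property with constant
`c > 0` if and only if every unit Hankel block of `T` has rank at most `c`. -/
theorem girs_iff_unit_hankel {F : Type*} [Field F] {V : Type*} [Fintype V] [DecidableEq V]
    (G : SimpleGraph V) (hG : G.IsTree) (m n : V → ℕ) (c : ℕ) (hc : 0 < c)
    (T : Matrix ((i : V) × Fin (m i)) ((j : V) × Fin (n j)) F) :
    (∀ A : Set V, (hankelBlock T A).rank ≤ c * edgeCount G A) ↔
      ∀ i j : V, G.Adj i j → (unitHankel G T i j).rank ≤ c := by
  constructor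
  · intro h i j hadj
    have hh := h (side G i j)
    rwa [edgeCount_side G hG hadj, mul_one] at hh
  · intro hH A
    exact girs_of_unit T hG hH A


end TSS
end

section
/- Let T ∈ F^{N×N} be an invertible matrix whose rows and columns are partitioned identically by a finite index set V (index set I = ⨆_{i∈V} I_i for both rows and columns). Then for every subset A ⊆ V with Ā = V∖A, the Hankel block of the inverse has the same rank as the corresponding Hankel block of T: rank (T⁻¹)⟨Ā,A⟩ = rank T⟨Ā,A⟩. -/
open Matrix

attribute [local instance] Classical.propDecidable

namespace TSS

variable {F : Type*} [Field F] {V : Type*} [Fintype V] [DecidableEq V]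

section Aux

variable {K : Type*} [Field K] {ι : Type*} [Fintype ι] [DecidableEq ι] (S : Set ι)

/-- Column-selection matrix for `S`. -/
private noncomputable def selE : Matrix ι {q : ι // q ∈ S} K :=
  (1 : Matrix ι ι K).submatrix id Subtype.val

/-- Row-selection matrix for `S`. -/
private noncomputable def selP : Matrix {q : ι // q ∈ S} ι K :=
  (1 : Matrix ι ι K).submatrix Subtype.val id

private lemma selP_mulVec (v : ι → K) : (selP S : Matrix _ _ K) *ᵥ v = fun q => v q.val := by
  funext q
  simp [selP, Matrix.mulVec, dotProduct, Matrix.one_apply, ite_mul,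
    Finset.sum_ite_eq]

private lemma selE_mulVec (x : {q : ι // q ∈ S} → K) :
    (selE S : Matrix ι _ K) *ᵥ x = fun r => if h : r ∈ S then x ⟨r, h⟩ else 0 := by
  funext r
  by_cases hr : r ∈ S
  · rw [show ((selE S : Matrix ι _ K) *ᵥ x) r
        = ∑ q : {q : ι // q ∈ S}, (if r = q.val then 1 else 0) * x q by
      simp [selE, Matrix.mulVec, dotProduct, Matrix.one_apply],
      Fintype.sum_eq_single (⟨r, hr⟩ : {q : ι // q ∈ S})]
    · simp [hr]
    · intro b hb
      have : ¬ r = b.val := fun h => hb (Subtype.ext h.symm)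
      simp [this]
  · rw [show ((selE S : Matrix ι _ K) *ᵥ x) r
        = ∑ q : {q : ι // q ∈ S}, (if r = q.val then 1 else 0) * x q by
      simp [selE, Matrix.mulVec, dotProduct, Matrix.one_apply]]
    rw [Finset.sum_eq_zero, dif_neg hr]
    intro b _
    have : ¬ r = b.val := fun h => hr (h ▸ b.2)
    simp [this]

private lemma selP_mulVec_selE (x : {q : ι // q ∈ S} → K) :
    (selP S : Matrix _ _ K) *ᵥ ((selE S : Matrix ι _ K) *ᵥ x) = x := by
  funext q
  simp only [selP_mulVec, selE_mulVec]
  simp [q.2]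

private lemma selPc_mulVec_selE (x : {q : ι // q ∈ S} → K) :
    (selP Sᶜ : Matrix _ _ K) *ᵥ ((selE S : Matrix ι _ K) *ᵥ x) = 0 := by
  funext p
  simp only [selP_mulVec, selE_mulVec]
  exact dif_neg p.2

private lemma selE_mulVec_selP (v : ι → K) (hv : (selP Sᶜ : Matrix _ _ K) *ᵥ v = 0) :
    (selE S : Matrix ι _ K) *ᵥ ((selP S : Matrix _ _ K) *ᵥ v) = v := by
  funext r
  simp only [selP_mulVec, selE_mulVec]
  by_cases hr : r ∈ S
  · simp [hr]
  · rw [dif_neg hr]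
    have := congrFun hv ⟨r, hr⟩
    rw [selP_mulVec] at this
    exact this.symm

private lemma submatrix_mulVec_sel (U : Matrix ι ι K) (x : {q : ι // q ∈ S} → K) :
    (U.submatrix (Subtype.val : {p : ι // p ∈ Sᶜ} → ι)
        (Subtype.val : {q : ι // q ∈ S} → ι)) *ᵥ x
      = (selP Sᶜ : Matrix _ _ K) *ᵥ (U *ᵥ ((selE S : Matrix ι _ K) *ᵥ x)) := by
  funext p
  simp only [selP_mulVec, selE_mulVec]
  simp only [Matrix.mulVec, dotProduct, Matrix.submatrix_apply]
  rw [← Fintype.sum_subtype_add_sum_subtype (· ∈ S) (fun r => U p.val r *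
      (if h : r ∈ S then x ⟨r, h⟩ else 0))]
  have h2 : ∑ r : {x : ι // x ∉ S}, U p.val r.val *
      (if h : (r : ι) ∈ S then x ⟨r, h⟩ else 0) = 0 := by
    apply Finset.sum_eq_zero
    intro b _
    rw [dif_neg b.2, mul_zero]
  rw [h2, add_zero]
  apply Finset.sum_congr rfl
  intro b _
  rw [dif_pos b.2]

/-- Key lemma: kernels of the Hankel blocks of two mutually inverse matrices
are linearly equivalent. -/
private lemma rank_submatrix_inv_eq (U W : Matrix ι ι K) (hUW : U * W = 1) (hWU : W * U = 1) :
    (W.submatrix (Subtype.val : {p : ι // p ∈ Sᶜ} → ι)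
        (Subtype.val : {q : ι // q ∈ S} → ι)).rank
      = (U.submatrix (Subtype.val : {p : ι // p ∈ Sᶜ} → ι)
        (Subtype.val : {q : ι // q ∈ S} → ι)).rank := by
  set MU := U.submatrix (Subtype.val : {p : ι // p ∈ Sᶜ} → ι)
      (Subtype.val : {q : ι // q ∈ S} → ι) with hMU
  set MW := W.submatrix (Subtype.val : {p : ι // p ∈ Sᶜ} → ι)
      (Subtype.val : {q : ι // q ∈ S} → ι) with hMW
  -- the transfer maps
  set f : ({q : ι // q ∈ S} → K) →ₗ[K] ({q : ι // q ∈ S} → K) :=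
    ((selP S : Matrix _ _ K) * U * (selE S : Matrix ι _ K)).mulVecLin with hf
  set g : ({q : ι // q ∈ S} → K) →ₗ[K] ({q : ι // q ∈ S} → K) :=
    ((selP S : Matrix _ _ K) * W * (selE S : Matrix ι _ K)).mulVecLin with hg
  have main : ∀ (U' W' : Matrix ι ι K), W' * U' = 1 →
      ∀ x : {q : ι // q ∈ S} → K,
        (U'.submatrix (Subtype.val : {p : ι // p ∈ Sᶜ} → ι)
          (Subtype.val : {q : ι // q ∈ S} → ι)) *ᵥ x = 0 →
        ((W'.submatrix (Subtype.val : {p : ι // p ∈ Sᶜ} → ι)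
          (Subtype.val : {q : ι // q ∈ S} → ι)) *ᵥ
            (((selP S : Matrix _ _ K) * U' * (selE S : Matrix ι _ K)) *ᵥ x) = 0) ∧
        (((selP S : Matrix _ _ K) * W' * (selE S : Matrix ι _ K)) *ᵥ
            (((selP S : Matrix _ _ K) * U' * (selE S : Matrix ι _ K)) *ᵥ x) = x) := by
    intro U' W' hinv x hx
    set v : ι → K := U' *ᵥ ((selE S : Matrix ι _ K) *ᵥ x) with hv
    have hQv : (selP Sᶜ : Matrix _ _ K) *ᵥ v = 0 := by
      rw [← submatrix_mulVec_sel]; exact hx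
    have hfx : ((selP S : Matrix _ _ K) * U' * (selE S : Matrix ι _ K)) *ᵥ x
        = (selP S : Matrix _ _ K) *ᵥ v := by
      rw [← Matrix.mulVec_mulVec, ← Matrix.mulVec_mulVec]
    have hEfx : (selE S : Matrix ι _ K) *ᵥ
        (((selP S : Matrix _ _ K) * U' * (selE S : Matrix ι _ K)) *ᵥ x) = v := by
      rw [hfx]; exact selE_mulVec_selP S v hQv
    have hWv : W' *ᵥ v = (selE S : Matrix ι _ K) *ᵥ x := by
      rw [hv, Matrix.mulVec_mulVec, hinv, Matrix.one_mulVec]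
    constructor
    · rw [submatrix_mulVec_sel, hEfx, hWv]
      exact selPc_mulVec_selE S x
    · rw [← Matrix.mulVec_mulVec, ← Matrix.mulVec_mulVec, hEfx, hWv]
      exact selP_mulVec_selE S x
  -- build the linear equivalence between kernels
  have hker : Module.finrank K (LinearMap.ker MU.mulVecLin)
      = Module.finrank K (LinearMap.ker MW.mulVecLin) := by
    have hf' : ∀ x : LinearMap.ker MU.mulVecLin, f x.val ∈ LinearMap.ker MW.mulVecLin :=
      fun x => (main U W hWU x.val x.2).1
    have hg' : ∀ y : LinearMap.ker MW.mulVecLin, g y.val ∈ LinearMap.ker MU.mulVecLin :=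
      fun y => (main W U hUW y.val y.2).1
    refine LinearEquiv.finrank_eq
      (LinearEquiv.ofLinear
        (LinearMap.codRestrict _ (f ∘ₗ (LinearMap.ker MU.mulVecLin).subtype) hf')
        (LinearMap.codRestrict _ (g ∘ₗ (LinearMap.ker MW.mulVecLin).subtype) hg')
        ?_ ?_)
    · refine LinearMap.ext fun y => Subtype.ext ?_
      exact (main W U hUW y.val y.2).2
    · refine LinearMap.ext fun x => Subtype.ext ?_
      exact (main U W hWU x.val x.2).2
  have h1 := LinearMap.finrank_range_add_finrank_ker MU.mulVecLin
  have h2 := LinearMap.finrank_range_add_finrank_ker MW.mulVecLin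
  rw [Module.finrank_pi] at h1 h2
  have hrU : MU.rank = Module.finrank K (LinearMap.range MU.mulVecLin) := rfl
  have hrW : MW.rank = Module.finrank K (LinearMap.range MW.mulVecLin) := rfl
  omega

end Aux

/-- for an invertible block-partitioned matrix `T` (identical row and column
partitions) and every `A ⊆ V`, `rank (T⁻¹)⟨Ā,A⟩ = rank T⟨Ā,A⟩`. -/
theorem inverse_hankel_rank {F : Type*} [Field F] {V : Type*} [Fintype V] [DecidableEq V]
    (n : V → ℕ)
    (T : Matrix ((i : V) × Fin (n i)) ((j : V) × Fin (n j)) F)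
    (hT : IsUnit T) (A : Set V) :
    (hankelBlock T⁻¹ A).rank = (hankelBlock T A).rank := by
  have hdet : IsUnit T.det := (Matrix.isUnit_iff_isUnit_det T).mp hT
  exact rank_submatrix_inv_eq {p : (i : V) × Fin (n i) | p.1 ∈ A} T T⁻¹
    (Matrix.mul_nonsing_inv T hdet) (Matrix.nonsing_inv_mul T hdet)

end TSS
end
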